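/- Let τ > 0 and let φ : ℝ → ℝ be a differentiable function with φ(s) > 0 for all s satisfying φ'(s)² + (φ(s)² − τ)² = φ(s)² for all s ∈ ℝ. Then for every s ∈ ℝ one has 2(φ(s)² + τ²/φ(s)²) = 2(φ(s) − τ/φ(s))² + 4τ ≤ 2 + 4τ. -/

import Mathlib

open Real

/-- Bound on the potential of the Jacobi operator of the Delaunay nodoid:
`2(φ² + τ²/φ²) = 2(φ − τ/φ)² + 4τ ≤ 2 + 4τ`. -/
theorem delaunay_jacobi_potential_bound (τ : ℝ) (hτ : 0 < τ) (φ : ℝ → ℝ)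
    (hdiff : Differentiable ℝ φ) (hpos : ∀ s, 0 < φ s)
    (hode : ∀ s, (deriv φ s) ^ 2 + (φ s ^ 2 - τ) ^ 2 = φ s ^ 2) :
    ∀ s : ℝ,
      2 * (φ s ^ 2 + τ ^ 2 / φ s ^ 2) = 2 * (φ s - τ / φ s) ^ 2 + 4 * τ
        ∧ 2 * (φ s - τ / φ s) ^ 2 + 4 * τ ≤ 2 + 4 * τ := by
  intro s
  have hφ := hpos s
  have hne : φ s ≠ 0 := ne_of_gt hφ
  constructor
  · field_simp
    ring
  · have h1 : (φ s ^ 2 - τ) ^ 2 ≤ φ s ^ 2 := by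
      have := hode s
      nlinarith [sq_nonneg (deriv φ s)]
    have h2 : (φ s - τ / φ s) ^ 2 ≤ 1 := by
      have heq : (φ s - τ / φ s) ^ 2 = (φ s ^ 2 - τ) ^ 2 / φ s ^ 2 := by
        field_simp
      rw [heq, div_le_one (by positivity)]
      exact h1
    linarith
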